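/- arXiv:1610.01510 — 2 statements merged into one kernel-verified Lean document; each statement's English description precedes it below -/
import Mathlib

section
/- There are exactly 2 isomorphism classes of simple modules over the group algebra F₂[SL(2, F₃)]; that is, there exist two simple F₂[SL(2, F₃)]-modules that are not isomorphic to each other, and every simple F₂[SL(2, F₃)]-module is isomorphic to one of them. -/
/-- The group algebra `F₂[SL(2, F₃)]`. -/
noncomputable abbrev F₂SL₂F₃ : Type :=
  MonoidAlgebra (ZMod 2) (Matrix.SpecialLinearGroup (Fin 2) (ZMod 3))

universe u

section SL23aux
open MonoidAlgebra

abbrev Gg := Matrix.SpecialLinearGroup (Fin 2) (ZMod 3)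
abbrev Aa := F₂SL₂F₃

instance : DecidableEq Gg := fun a b => decidable_of_iff (a.1 = b.1) Subtype.ext_iff.symm

def g₀ : Gg := ⟨!![1,1;0,1], by decide⟩
def ii : Gg := ⟨!![0,2;1,0], by decide⟩
def jj : Gg := ⟨!![1,1;1,2], by decide⟩
def cc : Gg := ⟨!![2,0;0,2], by decide⟩
def NL : List Gg := [1, cc, ii, cc*ii, jj, cc*jj, ii*jj, cc*(ii*jj)]
def ee (g : Gg) : ℕ := if g ∈ NL then 0 else if g * g₀⁻¹ ∈ NL then 1 else 2

lemma dec1 : g₀ ^ 3 = 1 := by decide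
lemma dec2 : ∀ g : Gg, cc * g = g * cc := by decide
lemma dec3 : ii * ii = cc := by decide
lemma dec4 : jj * jj = cc := by decide
lemma dec5 : jj * ii = cc * (ii * jj) := by decide
lemma dec6 : ∀ g : Gg, g * (g₀ ^ ee g)⁻¹ ∈ NL := by decide
lemma dec7 : ∀ g n : Gg, n ∈ NL → g⁻¹ * n * g ∈ NL := by decide
set_option maxHeartbeats 4000000 in
lemma dec8 : ∀ g h : Gg, ee (g * h) % 3 = (ee g + ee h) % 3 := by decide
lemma dec9 : ee 1 = 0 := by decide
lemma dec10 : ee g₀ = 1 := by decide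
lemma dec11 : cc * cc = 1 := by decide

lemma zval0 : (0 : ZMod 2).val = 0 := rfl
lemma zval1 : (1 : ZMod 2).val = 1 := rfl

lemma zmodcases (c : ZMod 2) : c = 0 ∨ c = 1 := by revert c; decide

/-! ### The two concrete modules -/

def Wt : Type := ZMod 2 × ZMod 2
instance : AddCommGroup Wt := inferInstanceAs (AddCommGroup (ZMod 2 × ZMod 2))
instance : Module (ZMod 2) Wt := inferInstanceAs (Module (ZMod 2) (ZMod 2 × ZMod 2))
instance : DecidableEq Wt := inferInstanceAs (DecidableEq (ZMod 2 × ZMod 2))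
instance : Fintype Wt := inferInstanceAs (Fintype (ZMod 2 × ZMod 2))

def wmk (x y : ZMod 2) : Wt := (x, y)

lemma wcases (w : Wt) : w = wmk 0 0 ∨ w = wmk 1 0 ∨ w = wmk 0 1 ∨ w = wmk 1 1 := by
  revert w; decide

def Lmap : Module.End (ZMod 2) Wt where
  toFun p := (p.2, p.1 + p.2)
  map_add' p q := by
    refine Prod.ext rfl ?_
    show (p.1 + q.1) + (p.2 + q.2) = (p.1 + p.2) + (q.1 + q.2)
    exact add_add_add_comm _ _ _ _
  map_smul' c p := by
    refine Prod.ext rfl ?_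
    show c • p.1 + c • p.2 = c • (p.1 + p.2)
    exact (smul_add _ _ _).symm

lemma Lmap_apply (p : Wt) : Lmap p = (p.2, p.1 + p.2) := rfl

lemma L3 : Lmap ^ 3 = 1 := by
  ext p
  show Lmap (Lmap (Lmap p)) = p
  show ((p.2 + (p.1 + p.2)), (p.1 + p.2) + (p.2 + (p.1 + p.2))) = p
  have h : ∀ x y : ZMod 2, y + (x + y) = x := by decide
  have h2 : ∀ x y : ZMod 2, x + y + x = y := by decide
  simp [Lmap_apply, h, h2]
  rfl

lemma Lpowmod (n : ℕ) : Lmap ^ n = Lmap ^ (n % 3) := by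
  conv_lhs => rw [← Nat.div_add_mod n 3]
  rw [pow_add, pow_mul, L3, one_pow, one_mul]

def χ : Gg →* Module.End (ZMod 2) Wt where
  toFun g := Lmap ^ ee g
  map_one' := by show Lmap ^ ee 1 = 1; rw [dec9, pow_zero]
  map_mul' g h := by
    show Lmap ^ ee (g * h) = Lmap ^ ee g * Lmap ^ ee h
    rw [Lpowmod, dec8, ← pow_add, ← Lpowmod]

noncomputable def φW : Aa →ₐ[ZMod 2] Module.End (ZMod 2) Wt :=
  MonoidAlgebra.lift (ZMod 2) (Module.End (ZMod 2) Wt) Gg χ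

noncomputable def modW : Module Aa Wt := Module.compHom Wt φW.toRingHom

noncomputable def εh : Aa →ₐ[ZMod 2] ZMod 2 := MonoidAlgebra.lift (ZMod 2) (ZMod 2) Gg 1

noncomputable def modV : Module Aa (ZMod 2) := Module.compHom _ εh.toRingHom

attribute [local instance] modV modW

lemma smulV (a : Aa) (c : ZMod 2) : a • c = εh a * c := rfl
lemma smulW (a : Aa) (w : Wt) : a • w = φW a w := rfl
lemma smulW_of (g : Gg) (w : Wt) : (MonoidAlgebra.of (ZMod 2) Gg g) • w = (Lmap ^ ee g) w := by
  rw [smulW]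
  show (φW (MonoidAlgebra.of (ZMod 2) Gg g)) w = _
  rw [φW, MonoidAlgebra.lift_of]
  rfl
lemma smulV_of (g : Gg) (c : ZMod 2) : (MonoidAlgebra.of (ZMod 2) Gg g) • c = c := by
  rw [smulV, εh, MonoidAlgebra.lift_of]
  simp

/-! ### Generic facts about modules over the group algebra -/

section Umod
variable {U : Type u} [AddCommGroup U] [Module Aa U]

/-- action of a group element -/
noncomputable def ofs (g : Gg) (u : U) : U := (MonoidAlgebra.of (ZMod 2) Gg g) • u

lemma ofs_mul (g h : Gg) (u : U) : ofs (g * h) u = ofs g (ofs h u) := by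
  unfold ofs; rw [map_mul, mul_smul]

lemma ofs_one (u : U) : ofs 1 u = u := by
  unfold ofs; rw [map_one, one_smul]

lemma ofs_add (g : Gg) (u v : U) : ofs g (u + v) = ofs g u + ofs g v := smul_add _ _ _

lemma ofs_zero (g : Gg) : ofs g (0 : U) = 0 := smul_zero _

lemma ofs_nsmul (g : Gg) (n : ℕ) (u : U) : ofs g (n • u) = n • ofs g u := smul_comm _ _ _

lemma char2U (u : U) : u + u = 0 := by
  have h0 : ((1 : Aa) + 1) = 0 := by
    have h : ((1 : ZMod 2) + 1) = 0 := by decide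
    calc (1 : Aa) + 1 = algebraMap (ZMod 2) Aa (1 + 1) := by rw [map_add, map_one]
    _ = 0 := by rw [h, map_zero]
  calc u + u = ((1 : Aa) + 1) • u := by rw [add_smul, one_smul]
  _ = 0 := by rw [h0, zero_smul]

lemma negU (u : U) : -u = u := neg_eq_of_add_eq_zero_left (char2U u)

/-- an AddSubgroup closed under the G-action is a submodule -/
noncomputable def toSub (S : AddSubgroup U) (hS : ∀ g : Gg, ∀ u ∈ S, ofs g u ∈ S) :
    Submodule Aa U where
  carrier := S
  add_mem' := S.add_mem
  zero_mem' := S.zero_mem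
  smul_mem' := by
    intro a u hu
    induction a using MonoidAlgebra.induction_on with
    | of g => exact hS g u hu
    | add f g hf hg => rw [add_smul]; exact S.add_mem hf hg
    | smul r f hf =>
        rw [Algebra.smul_def, mul_smul]
        rcases zmodcases r with rfl | rfl
        · rw [map_zero, zero_smul]; exact S.zero_mem
        · rw [map_one, one_smul]; exact hf

/-- Step A : the quaternion normal subgroup acts trivially on a simple module -/
theorem NLtriv (hU : IsSimpleModule Aa U) : ∀ n ∈ NL, ∀ u : U, ofs n u = u := by
  haveI := hU
  have hKc : ∀ u : U, ofs cc u = u := by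
    have hnt : Nontrivial U := IsSimpleModule.nontrivial Aa U
    obtain ⟨u₁, hu₁⟩ := exists_ne (0 : U)
    let K₁ : AddSubgroup U :=
      { carrier := {u | ofs cc u = u}
        add_mem' := by intro a b ha hb; simp only [Set.mem_setOf_eq] at *
                       rw [ofs_add, ha, hb]
        zero_mem' := ofs_zero cc
        neg_mem' := by intro a ha; simp only [Set.mem_setOf_eq] at *
                       rw [negU, ha] }
    have hcl : ∀ g : Gg, ∀ u ∈ K₁, ofs g u ∈ K₁ := by
      intro g u hu
      show ofs cc (ofs g u) = ofs g u
      rw [← ofs_mul, dec2 g, ofs_mul, hu]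
    rcases (IsSimpleOrder.eq_bot_or_eq_top (toSub K₁ hcl)) with hb | ht
    · exfalso
      have hmem : ∀ v : U, ofs cc v = v → v = 0 := by
        intro v hv
        have : v ∈ toSub K₁ hcl := hv
        rw [hb] at this; exact this
      by_cases hcu : ofs cc u₁ = u₁
      · exact hu₁ (hmem u₁ hcu)
      · have hv : ofs cc (ofs cc u₁ + u₁) = ofs cc u₁ + u₁ := by
          rw [ofs_add, ← ofs_mul, dec11, ofs_one, add_comm]
        have := hmem _ hv
        apply hcu
        have h2 : ofs cc u₁ = -u₁ := eq_neg_of_add_eq_zero_left this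
        rw [h2, negU]
    · intro u
      have : u ∈ toSub K₁ hcl := by rw [ht]; trivial
      exact this
  have hgen : ∀ u : U, ofs ii u = u → ofs jj u = u → ∀ n ∈ NL, ofs n u = u := by
    intro u hi hj n hn
    have hc := hKc u
    simp only [NL, List.mem_cons, List.mem_singleton, List.not_mem_nil, or_false] at hn
    rcases hn with rfl | rfl | rfl | rfl | rfl | rfl | rfl | rfl
    · exact ofs_one u
    · exact hc
    · exact hi
    · rw [ofs_mul, hi, hc]
    · exact hj
    · rw [ofs_mul, hj, hc]
    · rw [ofs_mul, hj, hi]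
    · rw [ofs_mul, ofs_mul, hj, hi, hc]
  let K : AddSubgroup U :=
    { carrier := {u | ∀ n ∈ NL, ofs n u = u}
      add_mem' := by intro a b ha hb n hn; rw [ofs_add, ha n hn, hb n hn]
      zero_mem' := by intro n hn; exact ofs_zero n
      neg_mem' := by intro a ha n hn; rw [negU]; exact ha n hn }
  have hclK : ∀ g : Gg, ∀ u ∈ K, ofs g u ∈ K := by
    intro g u hu n hn
    have h1 : n * g = g * (g⁻¹ * n * g) := by group
    rw [← ofs_mul, h1, ofs_mul, hu _ (dec7 g n hn)]
  have hij : ∀ u : U, ofs ii (ofs jj u) = ofs jj (ofs ii u) := by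
    intro u
    have h9 : ofs (cc*(ii*jj)) u = ofs (ii*jj) u := by rw [ofs_mul, hKc]
    rw [← ofs_mul, ← ofs_mul, dec5, h9]
  by_cases hi : ∀ u : U, ofs ii u = u
  · by_cases hj : ∀ u : U, ofs jj u = u
    · intro n hn u; exact hgen u (hi u) (hj u) n hn
    · push_neg at hj
      obtain ⟨u, hu⟩ := hj
      have hw0 : ofs jj u + u ≠ 0 := by
        intro h
        exact hu (by rw [eq_neg_of_add_eq_zero_left h, negU])
      have hwj : ofs jj (ofs jj u + u) = ofs jj u + u := by
        rw [ofs_add, ← ofs_mul, dec4, hKc, add_comm]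
      have hmem : (ofs jj u + u) ∈ K := hgen _ (hi _) hwj
      rcases (IsSimpleOrder.eq_bot_or_eq_top (toSub K hclK)) with hb | ht
      · exfalso
        have : (ofs jj u + u) ∈ toSub K hclK := hmem
        rw [hb] at this
        exact hw0 this
      · intro n hn u'
        have : u' ∈ toSub K hclK := by rw [ht]; trivial
        exact this n hn
  · push_neg at hi
    obtain ⟨u, hu⟩ := hi
    set v := ofs ii u + u with hvdef
    have hv0 : v ≠ 0 := by
      intro h
      exact hu (by rw [eq_neg_of_add_eq_zero_left h, negU])
    have hvi : ofs ii v = v := by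
      rw [hvdef, ofs_add, ← ofs_mul, dec3, hKc, add_comm]
    have key : ∃ w : U, w ≠ 0 ∧ ofs ii w = w ∧ ofs jj w = w := by
      by_cases hjv : ofs jj v = v
      · exact ⟨v, hv0, hvi, hjv⟩
      · refine ⟨ofs jj v + v, ?_, ?_, ?_⟩
        · intro h
          exact hjv (by rw [eq_neg_of_add_eq_zero_left h, negU])
        · rw [ofs_add, hij, hvi]
        · rw [ofs_add, ← ofs_mul, dec4, hKc, add_comm]
    obtain ⟨w, hw0, hwi, hwj⟩ := key
    have hmem : w ∈ K := hgen _ hwi hwj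
    rcases (IsSimpleOrder.eq_bot_or_eq_top (toSub K hclK)) with hb | ht
    · exfalso
      have : w ∈ toSub K hclK := hmem
      rw [hb] at this
      exact hw0 this
    · intro n hn u'
      have : u' ∈ toSub K hclK := by rw [ht]; trivial
      exact this n hn

/-! ### Step B : the action of the order-3 element -/

/-- action of g₀ -/
noncomputable def sg (u : U) : U := ofs g₀ u

lemma sg3 (u : U) : sg (sg (sg u)) = u := by
  have h1 : ofs (g₀ ^ 3) u = u := by rw [dec1, ofs_one]
  have h2 : g₀ ^ 3 = g₀ * g₀ * g₀ := by rw [pow_succ, pow_succ, pow_one]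
  rw [h2, ofs_mul, ofs_mul] at h1
  exact h1

lemma ofs_pow (k : ℕ) : ∀ u : U, ofs (g₀ ^ k) u = sg^[k] u := by
  induction k with
  | zero => intro u; rw [pow_zero, ofs_one, Function.iterate_zero_apply]
  | succ n ih =>
      intro u
      rw [pow_succ, ofs_mul, ih (ofs g₀ u)]
      show sg^[n] (sg u) = sg^[n + 1] u
      rw [← Function.iterate_succ_apply]

lemma ofs_decomp (hN : ∀ n ∈ NL, ∀ u : U, ofs n u = u) (g : Gg) (u : U) :
    ofs g u = sg^[ee g] u := by
  have h1 : g = (g * (g₀ ^ ee g)⁻¹) * g₀ ^ ee g := by group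
  calc ofs g u = ofs ((g * (g₀ ^ ee g)⁻¹) * g₀ ^ ee g) u := by rw [← h1]
  _ = ofs (g * (g₀ ^ ee g)⁻¹) (ofs (g₀ ^ ee g) u) := ofs_mul _ _ _
  _ = ofs (g₀ ^ ee g) u := hN _ (dec6 g) _
  _ = sg^[ee g] u := ofs_pow _ _

lemma sg_nsmul (n : ℕ) (u : U) : sg (n • u) = n • sg u := ofs_nsmul _ _ _

lemma sg_add (u v : U) : sg (u + v) = sg u + sg v := ofs_add _ _ _

lemma sg_zero : sg (0 : U) = 0 := ofs_zero _

lemma valadd {U : Type u} [AddCommGroup U] [Module Aa U] (x y : ZMod 2) (v : U) :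
    (x + y).val • v = x.val • v + y.val • v := by
  have hv1 : (1 : ZMod 2).val = 1 := rfl
  rcases zmodcases x with rfl | rfl <;> rcases zmodcases y with rfl | rfl <;>
    simp [show ((1:ZMod 2)+(1:ZMod 2)) = 0 from by decide, hv1, char2U v]

lemma valmul {U : Type u} [AddCommGroup U] [Module Aa U] (x y : ZMod 2) (v : U) :
    (x * y).val • v = x.val • y.val • v := by
  have hv1 : (1 : ZMod 2).val = 1 := rfl
  rcases zmodcases x with rfl | rfl <;> rcases zmodcases y with rfl | rfl <;> simp [hv1]

/-- classification of the simple modules -/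
theorem classify {U : Type u} [AddCommGroup U] [Module Aa U] (hU : IsSimpleModule Aa U) :
    Nonempty (U ≃ₗ[Aa] ZMod 2) ∨ Nonempty (U ≃ₗ[Aa] Wt) := by
  haveI := hU
  haveI : Nontrivial U := IsSimpleModule.nontrivial Aa U
  obtain ⟨u₀, hu₀⟩ := exists_ne (0 : U)
  have hN := NLtriv hU
  let KQ : AddSubgroup U :=
    { carrier := {u | sg u = u}
      add_mem' := by intro a b ha hb; simp only [Set.mem_setOf_eq] at *; rw [sg_add, ha, hb]
      zero_mem' := sg_zero
      neg_mem' := by intro a ha; simp only [Set.mem_setOf_eq] at *; rw [negU, ha] }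
  have hKQcl : ∀ g : Gg, ∀ u ∈ KQ, ofs g u ∈ KQ := by
    intro g u hu
    have hu' : sg u = u := hu
    show sg (ofs g u) = ofs g u
    rw [ofs_decomp hN g u]
    show sg (sg^[ee g] u) = sg^[ee g] u
    rw [← Function.iterate_succ_apply' sg (ee g) u, Function.iterate_succ_apply, hu']
  rcases IsSimpleOrder.eq_bot_or_eq_top (toSub KQ hKQcl) with hQb | hQt
  · -- kerQ = ⊥ : the 4-element module
    right
    have hker : ∀ u : U, sg u = u → u = 0 := by
      intro u hu
      have : u ∈ toSub KQ hKQcl := hu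
      rw [hQb] at this
      exact this
    have hP0 : ∀ u : U, sg (sg u) + sg u + u = 0 := by
      intro u
      apply hker
      have hs3 := sg3 u
      rw [sg_add, sg_add, hs3]
      abel
    have hrel : ∀ u : U, sg (sg u) = sg u + u := by
      intro u
      have h := hP0 u
      have h2 : sg (sg u) + sg u = -u := eq_neg_of_add_eq_zero_left h
      rw [negU] at h2
      have h3 : sg (sg u) + (sg u + sg u) = u + sg u := by rw [← add_assoc, h2]
      rw [char2U, add_zero] at h3
      rw [h3, add_comm]
    let gfun : Wt → U := fun w => w.1.val • u₀ + w.2.val • sg u₀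
    have gadd : ∀ w w' : Wt, gfun (w + w') = gfun w + gfun w' := by
      intro w w'
      show ((w + w').1.val • u₀ + (w + w').2.val • sg u₀) = _
      have h1 : (w + w').1 = w.1 + w'.1 := rfl
      have h2 : (w + w').2 = w.2 + w'.2 := rfl
      rw [h1, h2, valadd, valadd]
      show _ = (w.1.val • u₀ + w.2.val • sg u₀) + (w'.1.val • u₀ + w'.2.val • sg u₀)
      abel
    have gzero : gfun 0 = 0 := by
      show (0 : ZMod 2).val • u₀ + (0 : ZMod 2).val • sg u₀ = 0
      simp [zval0]
    have gL : ∀ w : Wt, gfun (Lmap w) = sg (gfun w) := by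
      intro w
      show ((Lmap w).1.val • u₀ + (Lmap w).2.val • sg u₀) = _
      have h1 : (Lmap w).1 = w.2 := rfl
      have h2 : (Lmap w).2 = w.1 + w.2 := rfl
      rw [h1, h2, valadd]
      show _ = sg (w.1.val • u₀ + w.2.val • sg u₀)
      rw [sg_add, sg_nsmul, sg_nsmul, hrel u₀, smul_add]
      abel
    have gpow : ∀ (k : ℕ) (w : Wt), gfun ((Lmap ^ k) w) = sg^[k] (gfun w) := by
      intro k
      induction k with
      | zero =>
          intro w
          rw [pow_zero, Function.iterate_zero_apply]
          rfl
      | succ n ihn =>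
          intro w
          rw [pow_succ, Module.End.mul_apply, ihn (Lmap w), gL, ← Function.iterate_succ_apply]
    have gsmul : ∀ (a : Aa) (w : Wt), gfun (a • w) = a • gfun w := by
      intro a
      induction a using MonoidAlgebra.induction_on with
      | of g =>
          intro w
          rw [smulW_of, gpow]
          show _ = ofs g (gfun w)
          rw [ofs_decomp hN]
      | add f g hf hg => intro w; rw [add_smul, add_smul, gadd, hf, hg]
      | smul r f hf =>
          intro w
          rcases zmodcases r with rfl | rfl
          · simp only [zero_smul]; exact gzero
          · rw [one_smul]; exact hf w
    let gW : Wt →ₗ[Aa] U :=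
      { toFun := gfun
        map_add' := gadd
        map_smul' := gsmul }
    have hg10 : gW (wmk 1 0) = u₀ := by
      show (1 : ZMod 2).val • u₀ + (0 : ZMod 2).val • sg u₀ = u₀
      simp [zval0, zval1]
    have hg01 : gW (wmk 0 1) = sg u₀ := by
      show (0 : ZMod 2).val • u₀ + (1 : ZMod 2).val • sg u₀ = sg u₀
      simp [zval0, zval1]
    have hg11 : gW (wmk 1 1) = u₀ + sg u₀ := by
      show (1 : ZMod 2).val • u₀ + (1 : ZMod 2).val • sg u₀ = u₀ + sg u₀
      simp [zval1]
    have hsg0 : sg u₀ ≠ 0 := by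
      intro h
      apply hu₀
      have := sg3 u₀
      rw [h, sg_zero, sg_zero] at this
      exact this.symm
    have hkerW : ∀ w : Wt, gW w = 0 → w = 0 := by
      intro w hw
      rcases wcases w with rfl | rfl | rfl | rfl
      · rfl
      · rw [hg10] at hw; exact absurd hw hu₀
      · rw [hg01] at hw; exact absurd hw hsg0
      · rw [hg11] at hw
        exfalso
        have h4 : u₀ = sg u₀ := by
          have h5 := eq_neg_of_add_eq_zero_left hw
          rwa [negU] at h5
        exact hu₀ (hker u₀ h4.symm)
    have hginj : Function.Injective gW := by
      intro w w' h
      have hWneg : ∀ v : Wt, -v = v := by decide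
      have hsum : gW (w + w') = 0 := by
        rw [map_add, h, char2U]
      have h0 := hkerW _ hsum
      have : w = -w' := eq_neg_of_add_eq_zero_left h0
      rw [hWneg] at this
      exact this
    have hgsur : Function.Surjective gW := by
      have hr : LinearMap.range gW ≠ ⊥ := by
        intro h
        have hmem : gW (wmk 1 0) ∈ LinearMap.range gW := ⟨wmk 1 0, rfl⟩
        rw [h] at hmem
        rw [hg10] at hmem
        exact hu₀ hmem
      rcases IsSimpleOrder.eq_bot_or_eq_top (LinearMap.range gW) with h | h
      · exact absurd h hr
      · exact LinearMap.range_eq_top.mp h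
    exact ⟨(LinearEquiv.ofBijective gW ⟨hginj, hgsur⟩).symm⟩
  · -- kerQ = ⊤ : the trivial module
    left
    have hsid : ∀ u : U, sg u = u := by
      intro u
      have : u ∈ toSub KQ hKQcl := by rw [hQt]; trivial
      exact this
    have htriv : ∀ (g : Gg) (u : U), ofs g u = u := by
      intro g u
      rw [ofs_decomp hN]
      generalize ee g = k
      induction k with
      | zero => rfl
      | succ n ihn => rw [Function.iterate_succ_apply, hsid, ihn]
    have heps : ∀ (a : Aa) (u : U), a • u = (εh a).val • u := by
      intro a
      induction a using MonoidAlgebra.induction_on with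
      | of g =>
          intro u
          have h1 : εh (MonoidAlgebra.of (ZMod 2) Gg g) = 1 := by
            rw [εh, MonoidAlgebra.lift_of]
            rfl
          rw [h1]
          show ofs g u = (1 : ZMod 2).val • u
          rw [htriv g u, zval1, one_smul]
      | add f g hf hg => intro u; rw [add_smul, map_add, valadd, hf, hg]
      | smul r f hf =>
          intro u
          rcases zmodcases r with rfl | rfl
          · simp only [zero_smul, map_zero]
            rw [zval0, zero_smul]
          · rw [one_smul]; exact hf u
    let fV : ZMod 2 →ₗ[Aa] U :=
      { toFun := fun c => c.val • u₀
        map_add' := fun c d => valadd c d u₀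
        map_smul' := by
          intro a c
          show (a • c).val • u₀ = a • (c.val • u₀)
          rw [smulV, heps, valmul] }
    have hf1 : fV 1 = u₀ := by
      show (1 : ZMod 2).val • u₀ = u₀
      rw [zval1, one_smul]
    have hf0 : fV 0 = 0 := by
      show (0 : ZMod 2).val • u₀ = 0
      rw [zval0, zero_smul]
    have hinj : Function.Injective fV := by
      intro c d h
      rcases zmodcases c with rfl | rfl <;> rcases zmodcases d with rfl | rfl
      · rfl
      · rw [hf0, hf1] at h; exact absurd h.symm hu₀
      · rw [hf0, hf1] at h; exact absurd h hu₀
      · rfl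
    have hsur : Function.Surjective fV := by
      have hr : LinearMap.range fV ≠ ⊥ := by
        intro h
        have hmem : fV 1 ∈ LinearMap.range fV := ⟨1, rfl⟩
        rw [h] at hmem
        rw [hf1] at hmem
        exact hu₀ hmem
      rcases IsSimpleOrder.eq_bot_or_eq_top (LinearMap.range fV) with h | h
      · exact absurd h hr
      · exact LinearMap.range_eq_top.mp h
    exact ⟨(LinearEquiv.ofBijective fV ⟨hinj, hsur⟩).symm⟩

end Umod

/-! ### The two modules are simple and non-isomorphic -/

theorem Vsimple : IsSimpleModule Aa (ZMod 2) := by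
  haveI : Nontrivial (Submodule Aa (ZMod 2)) := by
    refine ⟨⊥, ⊤, fun h => ?_⟩
    have h1 : (1 : ZMod 2) ∈ (⊥ : Submodule Aa (ZMod 2)) := by rw [h]; trivial
    have h2 : (1 : ZMod 2) = 0 := (Submodule.mem_bot Aa).mp h1
    exact one_ne_zero h2
  refine (isSimpleModule_iff ..).mpr ⟨fun S => ?_⟩
  by_cases h : S = ⊥
  · left; exact h
  · right
    obtain ⟨x, hxS, hx0⟩ := (Submodule.ne_bot_iff S).mp h
    have hx1 : x = 1 := by
      rcases zmodcases x with rfl | rfl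
      · exact absurd rfl hx0
      · rfl
    rw [Submodule.eq_top_iff']
    intro c
    rcases zmodcases c with rfl | rfl
    · exact S.zero_mem
    · rw [← hx1]; exact hxS

theorem Wsimple : IsSimpleModule Aa Wt := by
  haveI : Nontrivial (Submodule Aa Wt) := by
    refine ⟨⊥, ⊤, fun h => ?_⟩
    have h1 : wmk 1 0 ∈ (⊥ : Submodule Aa Wt) := by rw [h]; trivial
    have h2 : wmk 1 0 = 0 := (Submodule.mem_bot Aa).mp h1
    exact absurd h2 (by decide)
  refine (isSimpleModule_iff ..).mpr ⟨fun S => ?_⟩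
  by_cases h : S = ⊥
  · left; exact h
  · right
    obtain ⟨w, hwS, hw0⟩ := (Submodule.ne_bot_iff S).mp h
    have hLw : Lmap w ∈ S := by
      have h1 : (MonoidAlgebra.of (ZMod 2) Gg g₀) • w = Lmap w := by
        rw [smulW_of, dec10, pow_one]
      rw [← h1]
      exact S.smul_mem _ hwS
    have hall : wmk 1 0 ∈ S ∧ wmk 0 1 ∈ S ∧ wmk 1 1 ∈ S := by
      rcases wcases w with rfl | rfl | rfl | rfl
      · exact absurd rfl hw0
      · have hL : Lmap (wmk 1 0) = wmk 0 1 := by decide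
        rw [hL] at hLw
        refine ⟨hwS, hLw, ?_⟩
        have : wmk 1 1 = wmk 1 0 + wmk 0 1 := by decide
        rw [this]
        exact S.add_mem hwS hLw
      · have hL : Lmap (wmk 0 1) = wmk 1 1 := by decide
        rw [hL] at hLw
        refine ⟨?_, hwS, hLw⟩
        have : wmk 1 0 = wmk 0 1 + wmk 1 1 := by decide
        rw [this]
        exact S.add_mem hwS hLw
      · have hL : Lmap (wmk 1 1) = wmk 1 0 := by decide
        rw [hL] at hLw
        refine ⟨hLw, ?_, hwS⟩
        have : wmk 0 1 = wmk 1 1 + wmk 1 0 := by decide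
        rw [this]
        exact S.add_mem hwS hLw
    rw [Submodule.eq_top_iff']
    intro w'
    rcases wcases w' with rfl | rfl | rfl | rfl
    · exact S.zero_mem
    · exact hall.1
    · exact hall.2.1
    · exact hall.2.2

theorem noniso : IsEmpty ((ZMod 2) ≃ₗ[Aa] Wt) := by
  refine ⟨fun e => ?_⟩
  have hc := Fintype.card_congr e.toEquiv
  have h2 : Fintype.card (ZMod 2) = 2 := by decide
  have h4 : Fintype.card Wt = 4 := by decide
  omega

theorem stmt12 :
    ∃ (V W : Type) (_ : AddCommGroup V) (_ : Module F₂SL₂F₃ V)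
      (_ : AddCommGroup W) (_ : Module F₂SL₂F₃ W),
      IsSimpleModule F₂SL₂F₃ V ∧ IsSimpleModule F₂SL₂F₃ W ∧
      IsEmpty (V ≃ₗ[F₂SL₂F₃] W) ∧
      ∀ (U : Type u) [AddCommGroup U] [Module F₂SL₂F₃ U], IsSimpleModule F₂SL₂F₃ U →
        (Nonempty (U ≃ₗ[F₂SL₂F₃] V) ∨ Nonempty (U ≃ₗ[F₂SL₂F₃] W)) := by
  refine ⟨ZMod 2, Wt, inferInstance, modV, inferInstance, modW,
    Vsimple, Wsimple, noniso, ?_⟩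
  intro Uu _ _ hU
  exact classify hU

end SL23aux
end

section
/- There exists a simple module V over the group algebra ℚ[SL(2, F₃)], finite-dimensional over ℚ, whose endomorphism ring End_{ℚ[SL(2,F₃)]}(V) is a noncommutative division ring of dimension 4 over ℚ. -/
/-- The rational group algebra `ℚ[SL(2, F₃)]`. -/
noncomputable abbrev QSL₂F₃ : Type :=
  MonoidAlgebra ℚ (Matrix.SpecialLinearGroup (Fin 2) (ZMod 3))

open Quaternion

abbrev Gr := Matrix.SpecialLinearGroup (Fin 2) (ZMod 3)
abbrev HZ := QuaternionAlgebra ℤ (-1 : ℤ) (0 : ℤ) (-1 : ℤ)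

instance {R : Type*} [DecidableEq R] {c1 c2 c3 : R} : DecidableEq (QuaternionAlgebra R c1 c2 c3) :=
  fun x y =>
  decidable_of_iff (x.re = y.re ∧ x.imI = y.imI ∧ x.imJ = y.imJ ∧ x.imK = y.imK)
    (QuaternionAlgebra.ext_iff (x := x) (y := y)).symm

def LZ : ZMod 3 → ℤ := fun x => if x = 0 then 0 else if x = 1 then 1 else -1

def ψm (m : Matrix (Fin 2) (Fin 2) (ZMod 3)) : HZ :=
  let a := 2*(m 0 0 + m 1 1)
  let b := 2*(m 1 0 - m 0 1)
  let c := m 0 0 + m 0 1 + m 1 0 - m 1 1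
  let d := m 0 1 + m 1 0 - m 0 0 + m 1 1
  let q : HZ := ⟨LZ a, LZ b, LZ c, LZ d⟩
  if a ≠ 0 ∧ b ≠ 0 ∧ c ≠ 0 ∧ d ≠ 0 then -q else 2*q

set_option maxHeartbeats 4000000 in
theorem psi_mul : ∀ g h : Gr, (⟨2,0,0,0⟩ : HZ) * ψm ((g*h) : Gr).1 = ψm g.1 * ψm h.1 := by
  decide

theorem psi_one : ψm (1:Gr).1 = ⟨2,0,0,0⟩ := by decide

def twoH : ℍ[ℚ] := ⟨2,0,0,0⟩
def iQ : ℍ[ℚ] := ⟨0,1,0,0⟩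
def jQ : ℍ[ℚ] := ⟨0,0,1,0⟩
def kQ : ℍ[ℚ] := ⟨0,0,0,1⟩

theorem two_mul_eq_smul (X : ℍ[ℚ]) : twoH * X = (2:ℚ) • X := by
  ext <;> simp only [Quaternion.re_mul, Quaternion.imI_mul,
    Quaternion.imJ_mul, Quaternion.imK_mul] <;> simp [twoH]

def gI : Gr := ⟨!![0,2;1,0], by decide⟩
def gJ : Gr := ⟨!![1,1;1,2], by decide⟩

theorem psi_gI : ψm gI.1 = ⟨0,2,0,0⟩ := by decide
theorem psi_gJ : ψm gJ.1 = ⟨0,0,2,0⟩ := by decide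

noncomputable def ZB : QuaternionAlgebra.Basis ℍ[ℚ] (-1 : ℤ) (0 : ℤ) (-1 : ℤ) where
  i := iQ
  j := jQ
  k := kQ
  i_mul_i := by ext <;> simp only [Quaternion.re_mul, Quaternion.imI_mul,
    Quaternion.imJ_mul, Quaternion.imK_mul, Quaternion.re_smul, Quaternion.imI_smul,
    Quaternion.imJ_smul, Quaternion.imK_smul, Quaternion.re_add, Quaternion.imI_add,
    Quaternion.imJ_add, Quaternion.imK_add, Quaternion.re_sub, Quaternion.imI_sub,
    Quaternion.imJ_sub, Quaternion.imK_sub] <;> simp [iQ]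
  j_mul_j := by ext <;> simp only [Quaternion.re_mul, Quaternion.imI_mul,
    Quaternion.imJ_mul, Quaternion.imK_mul, Quaternion.re_smul, Quaternion.imI_smul,
    Quaternion.imJ_smul, Quaternion.imK_smul, Quaternion.re_add, Quaternion.imI_add,
    Quaternion.imJ_add, Quaternion.imK_add, Quaternion.re_sub, Quaternion.imI_sub,
    Quaternion.imJ_sub, Quaternion.imK_sub] <;> simp [jQ]
  i_mul_j := by ext <;> simp only [Quaternion.re_mul, Quaternion.imI_mul,
    Quaternion.imJ_mul, Quaternion.imK_mul, Quaternion.re_smul, Quaternion.imI_smul,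
    Quaternion.imJ_smul, Quaternion.imK_smul, Quaternion.re_add, Quaternion.imI_add,
    Quaternion.imJ_add, Quaternion.imK_add, Quaternion.re_sub, Quaternion.imI_sub,
    Quaternion.imJ_sub, Quaternion.imK_sub] <;> simp [iQ, jQ, kQ]
  j_mul_i := by ext <;> simp only [Quaternion.re_mul, Quaternion.imI_mul,
    Quaternion.imJ_mul, Quaternion.imK_mul, Quaternion.re_smul, Quaternion.imI_smul,
    Quaternion.imJ_smul, Quaternion.imK_smul, Quaternion.re_add, Quaternion.imI_add,
    Quaternion.imJ_add, Quaternion.imK_add, Quaternion.re_sub, Quaternion.imI_sub,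
    Quaternion.imJ_sub, Quaternion.imK_sub] <;> simp [iQ, jQ, kQ]

noncomputable def toQ : HZ →ₐ[ℤ] ℍ[ℚ] := ZB.liftHom

theorem toQ_mk (a b c d : ℤ) : toQ ⟨a,b,c,d⟩ = ⟨(a:ℚ),(b:ℚ),(c:ℚ),(d:ℚ)⟩ := by
  show ZB.lift _ = _
  unfold QuaternionAlgebra.Basis.lift
  ext <;> simp only [Quaternion.re_mul, Quaternion.imI_mul,
    Quaternion.imJ_mul, Quaternion.imK_mul, Quaternion.re_smul, Quaternion.imI_smul,
    Quaternion.imJ_smul, Quaternion.imK_smul, Quaternion.re_add, Quaternion.imI_add,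
    Quaternion.imJ_add, Quaternion.imK_add, Quaternion.re_sub, Quaternion.imI_sub,
    Quaternion.imJ_sub, Quaternion.imK_sub] <;> simp [ZB, iQ, jQ, kQ]

noncomputable def Φ : Gr →* ℍ[ℚ] where
  toFun g := (2:ℚ)⁻¹ • toQ (ψm g.1)
  map_one' := by
    rw [psi_one]
    ext <;> simp only [Quaternion.re_smul, Quaternion.imI_smul, Quaternion.imJ_smul, Quaternion.imK_smul] <;> rw [toQ_mk] <;> norm_num
  map_mul' g h := by
    have key : twoH * toQ (ψm ((g*h):Gr).1) = toQ (ψm g.1) * toQ (ψm h.1) := by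
      rw [show twoH = toQ ⟨2,0,0,0⟩ by rw [toQ_mk]; ext <;> norm_num [twoH],
        ← map_mul, ← map_mul, psi_mul]
    rw [smul_mul_smul_comm, ← key, two_mul_eq_smul, smul_smul]
    norm_num

noncomputable def α : QSL₂F₃ →ₐ[ℚ] ℍ[ℚ] := MonoidAlgebra.lift ℚ ℍ[ℚ] Gr Φ

noncomputable instance modV_s15 : Module QSL₂F₃ ℍ[ℚ] := Module.compHom _ α.toRingHom

theorem smul_defn (x : QSL₂F₃) (v : ℍ[ℚ]) : x • v = α x * v := rfl

theorem Φ_gI : Φ gI = iQ := by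
  show (2:ℚ)⁻¹ • toQ (ψm gI.1) = _
  rw [psi_gI]
  ext <;> simp only [Quaternion.re_smul, Quaternion.imI_smul, Quaternion.imJ_smul, Quaternion.imK_smul] <;> rw [toQ_mk] <;> norm_num [iQ]

theorem Φ_gJ : Φ gJ = jQ := by
  show (2:ℚ)⁻¹ • toQ (ψm gJ.1) = _
  rw [psi_gJ]
  ext <;> simp only [Quaternion.re_smul, Quaternion.imI_smul, Quaternion.imJ_smul, Quaternion.imK_smul] <;> rw [toQ_mk] <;> norm_num [jQ]

theorem α_surj : Function.Surjective α := by
  intro w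
  have hof : ∀ g : Gr, Φ g ∈ α.range := fun g =>
    ⟨MonoidAlgebra.of ℚ Gr g, MonoidAlgebra.lift_of Φ g⟩
  have hi : iQ ∈ α.range := Φ_gI ▸ hof gI
  have hj : jQ ∈ α.range := Φ_gJ ▸ hof gJ
  have hk : kQ ∈ α.range := by
    have := mul_mem hi hj
    rwa [show iQ * jQ = kQ by ext <;> simp only [Quaternion.re_mul, Quaternion.imI_mul,
    Quaternion.imJ_mul, Quaternion.imK_mul, Quaternion.re_smul, Quaternion.imI_smul,
    Quaternion.imJ_smul, Quaternion.imK_smul, Quaternion.re_add, Quaternion.imI_add,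
    Quaternion.imJ_add, Quaternion.imK_add, Quaternion.re_sub, Quaternion.imI_sub,
    Quaternion.imJ_sub, Quaternion.imK_sub] <;> simp [iQ, jQ, kQ]] at this
  have hw : w = algebraMap ℚ ℍ[ℚ] w.re + w.imI • iQ + w.imJ • jQ + w.imK • kQ := by
    ext <;> simp only [Quaternion.re_mul, Quaternion.imI_mul,
    Quaternion.imJ_mul, Quaternion.imK_mul, Quaternion.re_smul, Quaternion.imI_smul,
    Quaternion.imJ_smul, Quaternion.imK_smul, Quaternion.re_add, Quaternion.imI_add,
    Quaternion.imJ_add, Quaternion.imK_add, Quaternion.re_sub, Quaternion.imI_sub,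
    Quaternion.imJ_sub, Quaternion.imK_sub] <;> simp [iQ, jQ, kQ]
  have : w ∈ α.range := by
    rw [hw]
    exact add_mem (add_mem (add_mem (α.range.algebraMap_mem _)
      (α.range.smul_mem hi _)) (α.range.smul_mem hj _)) (α.range.smul_mem hk _)
  exact this

instance : IsScalarTower ℚ QSL₂F₃ ℍ[ℚ] :=
  ⟨fun q x v => by rw [smul_defn, smul_defn, map_smul, smul_mul_assoc]⟩

instance : SMulCommClass QSL₂F₃ ℚ ℍ[ℚ] :=
  ⟨fun x q v => by rw [smul_defn, smul_defn, mul_smul_comm]⟩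

theorem end_key (f : Module.End QSL₂F₃ ℍ[ℚ]) (w v : ℍ[ℚ]) : f (w * v) = w * f v := by
  obtain ⟨x, hx⟩ := α_surj w
  rw [← hx, ← smul_defn, ← smul_defn, f.map_smul]

theorem end_eval (f : Module.End QSL₂F₃ ℍ[ℚ]) (v : ℍ[ℚ]) : f v = v * f 1 := by
  conv_lhs => rw [← mul_one v]
  exact end_key f v 1

noncomputable def rmul (q : ℍ[ℚ]) : Module.End QSL₂F₃ ℍ[ℚ] where
  toFun v := v * q
  map_add' a b := add_mul a b q
  map_smul' x v := by simp only [smul_defn, mul_assoc, RingHom.id_apply]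

theorem simpleV : IsSimpleModule QSL₂F₃ ℍ[ℚ] := by
  rw [isSimpleModule_iff]
  refine ⟨fun N => ?_⟩
  by_cases hN : N = ⊥
  · exact Or.inl hN
  · right
    obtain ⟨v, hvN, hv0⟩ := Submodule.exists_mem_ne_zero_of_ne_bot hN
    rw [eq_top_iff]
    intro w _
    obtain ⟨x, hx⟩ := α_surj (w * v⁻¹)
    have : w = x • v := by rw [smul_defn, hx, inv_mul_cancel_right₀ hv0]
    rw [this]
    exact N.smul_mem x hvN

theorem rmul_apply (q v : ℍ[ℚ]) : rmul q v = v * q := rfl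

theorem end_eq_rmul (f : Module.End QSL₂F₃ ℍ[ℚ]) : f = rmul (f 1) :=
  LinearMap.ext fun v => end_eval f v

theorem end_isUnit (f : Module.End QSL₂F₃ ℍ[ℚ]) (hf : f ≠ 0) : IsUnit f := by
  have h1 : f 1 ≠ 0 := by
    intro h
    exact hf (LinearMap.ext fun v => by rw [end_eval f v, h, mul_zero]; rfl)
  refine isUnit_iff_exists.mpr ⟨rmul (f 1)⁻¹, ?_, ?_⟩
  · exact LinearMap.ext fun v => by
      rw [Module.End.mul_apply, rmul_apply, end_eval f, inv_mul_cancel_right₀ h1]; rfl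
  · exact LinearMap.ext fun v => by
      rw [Module.End.mul_apply, rmul_apply, end_eval f, mul_inv_cancel_right₀ h1]; rfl

theorem end_noncomm : rmul iQ * rmul jQ ≠ rmul jQ * rmul iQ := by
  intro h
  have := DFunLike.congr_fun h 1
  simp only [Module.End.mul_apply, rmul_apply, one_mul] at this
  rw [Quaternion.ext_iff] at this
  simp only [Quaternion.re_mul, Quaternion.imI_mul,
    Quaternion.imJ_mul, Quaternion.imK_mul, Quaternion.re_smul, Quaternion.imI_smul,
    Quaternion.imJ_smul, Quaternion.imK_smul, Quaternion.re_add, Quaternion.imI_add,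
    Quaternion.imJ_add, Quaternion.imK_add, Quaternion.re_sub, Quaternion.imI_sub,
    Quaternion.imJ_sub, Quaternion.imK_sub] at this
  simp [iQ, jQ] at this
  norm_num at this

noncomputable def endEquiv : Module.End QSL₂F₃ ℍ[ℚ] ≃ₗ[ℚ] ℍ[ℚ] where
  toFun f := f 1
  map_add' f g := rfl
  map_smul' q f := rfl
  invFun q := rmul q
  left_inv f := (end_eq_rmul f).symm
  right_inv q := one_mul q

theorem stmt15 :
    ∃ (V : Type) (_ : AddCommGroup V) (_ : Module QSL₂F₃ V) (_ : Module ℚ V)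
      (_ : IsScalarTower ℚ QSL₂F₃ V) (_ : SMulCommClass QSL₂F₃ ℚ V),
      IsSimpleModule QSL₂F₃ V ∧ FiniteDimensional ℚ V ∧
      -- the endomorphism ring is a division ring ...
      (∀ f : Module.End QSL₂F₃ V, f ≠ 0 → IsUnit f) ∧
      -- ... which is noncommutative ...
      (∃ f g : Module.End QSL₂F₃ V, f * g ≠ g * f) ∧
      -- ... and has dimension 4 over ℚ.
      Module.finrank ℚ (Module.End QSL₂F₃ V) = 4 := by
  refine ⟨ℍ[ℚ], inferInstance, inferInstance, inferInstance, inferInstance, inferInstance,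
    simpleV, inferInstance, end_isUnit, ⟨rmul iQ, rmul jQ, end_noncomm⟩, ?_⟩
  rw [endEquiv.finrank_eq, Quaternion.finrank_eq_four]
end
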